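/- Let L be a subspace of ℂ^{𝔽₂^D} invariant under both 𝐀 and 𝐀*. Then L ∩ ℂ^X is invariant under both 𝐀₂ and 𝐀*, where ℂ^X denotes the subspace of functions supported on the set X of even-Hamming-weight vectors and 𝐀₂ is the matrix with (𝐀₂)_{yz} = 1 if w(y−z) = 2 and 0 otherwise. -/

import Mathlib

open Matrix Finset


open Matrix

/-- Vertex set of the hypercube `H(D,2)`: binary words of length `D`. -/
abbrev Vtx (D : ℕ) := Fin D → ZMod 2

/-- Adjacency matrix of the hypercube `H(D,2)`. -/
noncomputable def adjCube (D : ℕ) : Matrix (Vtx D) (Vtx D) ℂ :=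
  fun y z => if hammingNorm (y - z) = 1 then 1 else 0

/-- The `i`-th distance matrix of the hypercube `H(D,2)`. -/
noncomputable def distCube (D i : ℕ) : Matrix (Vtx D) (Vtx D) ℂ :=
  fun y z => if hammingNorm (y - z) = i then 1 else 0

/-- Dual adjacency matrix of the hypercube with respect to `x₀`. -/
noncomputable def dualCube (D : ℕ) (x₀ : Vtx D) : Matrix (Vtx D) (Vtx D) ℂ :=
  Matrix.diagonal fun y => (D : ℂ) - 2 * hammingNorm (x₀ - y)

/-- The subspace `ℂ^X` of `ℂ^{𝔽₂^D}`: functions supported on vectors of even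
Hamming weight. -/
noncomputable def evenSupp (D : ℕ) : Submodule ℂ (Vtx D → ℂ) where
  carrier := {f | ∀ y : Vtx D, ¬ Even (hammingNorm y) → f y = 0}
  add_mem' := by
    intro a b ha hb y hy
    simp [ha y hy, hb y hy]
  zero_mem' := by
    intro y hy
    rfl
  smul_mem' := by
    intro c f hf y hy
    simp [hf y hy]

/-- The subspace `ℂ^{𝔽₂^D∖X}` of `ℂ^{𝔽₂^D}`: functions supported on vectors of odd
Hamming weight. -/
noncomputable def oddSupp (D : ℕ) : Submodule ℂ (Vtx D → ℂ) where
  carrier := {f | ∀ y : Vtx D, Even (hammingNorm y) → f y = 0}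
  add_mem' := by
    intro a b ha hb y hy
    simp [ha y hy, hb y hy]
  zero_mem' := by
    intro y hy
    rfl
  smul_mem' := by
    intro c f hf y hy
    simp [hf y hy]


namespace Hyp
variable {D : ℕ}

lemma zmod2_eq_one {a : ZMod 2} (h : a ≠ 0) : a = 1 := by revert a; decide

lemma neg_self (t : Vtx D) : -t = t := by
  funext i
  have : ∀ a : ZMod 2, -a = a := by decide
  exact this (t i)

noncomputable abbrev eV (D : ℕ) (i : Fin D) : Vtx D := Pi.single i 1

lemma eV_add_self (i : Fin D) : eV D i + eV D i = 0 := by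
  funext k
  have : ∀ a : ZMod 2, a + a = 0 := by decide
  exact this _

lemma eV_injective : Function.Injective (eV D) := by
  intro i j h
  by_contra hij
  have h1 : eV D i i = 1 := Pi.single_eq_same i 1
  have h2 : eV D j i = 0 := Pi.single_eq_of_ne hij 1
  rw [h, h2] at h1
  exact one_ne_zero h1.symm

lemma norm_one_iff (t : Vtx D) : hammingNorm t = 1 ↔ ∃ i, t = eV D i := by
  constructor
  · intro h
    obtain ⟨i, hi⟩ := Finset.card_eq_one.mp h
    refine ⟨i, funext fun j => ?_⟩
    by_cases hj : j = i
    · subst hj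
      have : j ∈ ({j} : Finset (Fin D)) := Finset.mem_singleton_self j
      rw [← hi, Finset.mem_filter] at this
      rw [zmod2_eq_one this.2]
      exact (Pi.single_eq_same (M := fun _ : Fin D => ZMod 2) j 1).symm
    · have : j ∉ ({i} : Finset (Fin D)) := by simpa using hj
      rw [← hi, Finset.mem_filter] at this
      push_neg at this
      rw [this (Finset.mem_univ j)]
      exact (Pi.single_eq_of_ne (M := fun _ : Fin D => ZMod 2) hj 1).symm
  · rintro ⟨i, rfl⟩
    have : ({j | eV D i j ≠ 0} : Finset (Fin D)) = {i} := by
      ext j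
      simp [Pi.single_apply]
    rw [hammingNorm, this, Finset.card_singleton]

lemma supp_pair {i j : Fin D} (hij : i ≠ j) :
    ({k | (eV D i + eV D j) k ≠ 0} : Finset (Fin D)) = {i, j} := by
  ext k
  simp only [Finset.mem_filter, Finset.mem_univ, true_and, Finset.mem_insert,
    Finset.mem_singleton, Pi.add_apply, Pi.single_apply]
  by_cases hki : k = i <;> by_cases hkj : k = j <;> simp_all

lemma norm_two_iff (t : Vtx D) :
    hammingNorm t = 2 ↔ ∃ i j, i ≠ j ∧ t = eV D i + eV D j := by
  constructor
  · intro h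
    obtain ⟨a, b, hab, hs⟩ := Finset.card_eq_two.mp h
    refine ⟨a, b, hab, funext fun k => ?_⟩
    have hmem : ∀ k, t k ≠ 0 ↔ (k = a ∨ k = b) := by
      intro k
      constructor
      · intro hk
        have : k ∈ ({j | t j ≠ 0} : Finset (Fin D)) := by
          simp [hk]
        rw [hs] at this
        simpa using this
      · intro hk
        have : k ∈ ({a, b} : Finset (Fin D)) := by simpa using hk
        rw [← hs] at this
        simp only [Finset.mem_filter] at this
        exact this.2
    by_cases hka : k = a
    · subst hka
      have h1 : t k ≠ 0 := (hmem k).mpr (Or.inl rfl)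
      rw [zmod2_eq_one h1]
      have : (eV D k + eV D b) k = 1 := by
        simp [Pi.single_apply, (by exact fun h => hab h : ¬ k = b)]
      rw [this]
    · by_cases hkb : k = b
      · subst hkb
        have h1 : t k ≠ 0 := (hmem k).mpr (Or.inr rfl)
        rw [zmod2_eq_one h1]
        have : (eV D a + eV D k) k = 1 := by
          simp [Pi.single_apply, fun h => hka h]
        rw [this]
      · have h1 : t k = 0 := by
          by_contra hk
          rcases (hmem k).mp hk with h | h
          exacts [hka h, hkb h]
        rw [h1]
        simp [Pi.single_apply, hka, hkb]
  · rintro ⟨i, j, hij, rfl⟩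
    rw [hammingNorm, supp_pair hij]
    rw [Finset.card_insert_of_notMem (by simpa using hij), Finset.card_singleton]

lemma pair_eq {i j a b : Fin D} (hij : i ≠ j) (hab : a ≠ b)
    (h : eV D i + eV D j = eV D a + eV D b) : (i = a ∧ j = b) ∨ (i = b ∧ j = a) := by
  have hsupp : ({i, j} : Finset (Fin D)) = {a, b} := by
    rw [← supp_pair hij, ← supp_pair hab, h]
  have hi : i = a ∨ i = b := by
    have : i ∈ ({a, b} : Finset (Fin D)) := hsupp ▸ (by simp)
    simpa using this
  have hj : j = a ∨ j = b := by
    have : j ∈ ({a, b} : Finset (Fin D)) := hsupp ▸ (by simp)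
    simpa using this
  rcases hi with h1 | h1 <;> rcases hj with h2 | h2
  · exact absurd (h1.trans h2.symm) hij
  · exact Or.inl ⟨h1, h2⟩
  · exact Or.inr ⟨h1, h2⟩
  · exact absurd (h1.trans h2.symm) hij

end Hyp

namespace Hyp

variable {D : ℕ}

lemma sum_shift (v : Vtx D → ℂ) (y : Vtx D) (n : ℕ) :
    ∑ z : Vtx D, (if hammingNorm (y - z) = n then v z else 0)
      = ∑ t ∈ ({t : Vtx D | hammingNorm t = n} : Finset (Vtx D)), v (y + t) := by
  rw [Finset.sum_filter]
  refine (Fintype.sum_equiv (Equiv.addLeft y) _ _ fun t => ?_).symm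
  simp only [Equiv.coe_addLeft]
  have h1 : y - (y + t) = t := by
    rw [sub_add_eq_sub_sub, sub_self, zero_sub, neg_self]
  simp only [h1]

lemma mulVec_adj (v : Vtx D → ℂ) (y : Vtx D) :
    (adjCube D).mulVec v y = ∑ i, v (y + eV D i) := by
  have h0 : (adjCube D).mulVec v y
      = ∑ z : Vtx D, (if hammingNorm (y - z) = 1 then v z else 0) := by
    simp [Matrix.mulVec, dotProduct, adjCube, ite_mul]
  rw [h0, sum_shift]
  have himg : ({t : Vtx D | hammingNorm t = 1} : Finset (Vtx D))
      = Finset.univ.image (eV D) := by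
    ext t
    simp only [Finset.mem_filter, Finset.mem_univ, true_and, Finset.mem_image]
    rw [norm_one_iff]
    exact ⟨fun ⟨i, h⟩ => ⟨i, h.symm⟩, fun ⟨i, h⟩ => ⟨i, h.symm⟩⟩
  rw [himg, Finset.sum_image (fun a _ b _ h => eV_injective h)]

lemma mulVec_dist2 (v : Vtx D → ℂ) (y : Vtx D) :
    (distCube D 2).mulVec v y
      = ∑ t ∈ ({t : Vtx D | hammingNorm t = 2} : Finset (Vtx D)), v (y + t) := by
  have h0 : (distCube D 2).mulVec v y
      = ∑ z : Vtx D, (if hammingNorm (y - z) = 2 then v z else 0) := by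
    simp [Matrix.mulVec, dotProduct, distCube, ite_mul]
  rw [h0, sum_shift]

set_option maxHeartbeats 1000000 in
lemma keyAA (v : Vtx D → ℂ) (y : Vtx D) :
    (adjCube D).mulVec ((adjCube D).mulVec v) y
      = (D : ℂ) * v y + 2 * (distCube D 2).mulVec v y := by
  rw [mulVec_adj]
  simp_rw [mulVec_adj]
  have hsum : ∑ i, ∑ j, v (y + eV D i + eV D j)
      = ∑ p ∈ (Finset.univ ×ˢ Finset.univ : Finset (Fin D × Fin D)),
          v (y + (eV D p.1 + eV D p.2)) := by
    rw [Finset.sum_product]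
    simp_rw [add_assoc]
  rw [hsum, ← Finset.diag_union_offDiag,
    Finset.sum_union (Finset.disjoint_diag_offDiag _), Finset.sum_diag]
  have hdiag : ∑ i : Fin D, v (y + (eV D i + eV D i)) = (D : ℂ) * v y := by
    simp [eV_add_self, Finset.card_univ, nsmul_eq_mul]
  rw [hdiag]
  congr 1
  -- off-diagonal part
  have hoff : ∑ p ∈ (Finset.univ : Finset (Fin D)).offDiag,
      v (y + (eV D p.1 + eV D p.2))
      = ∑ t ∈ ((Finset.univ : Finset (Fin D)).offDiag.image
          fun p => eV D p.1 + eV D p.2),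
          (#{p ∈ (Finset.univ : Finset (Fin D)).offDiag |
              eV D p.1 + eV D p.2 = t}) • v (y + t) :=
    Finset.sum_comp (s := (Finset.univ : Finset (Fin D)).offDiag)
      (f := fun t : Vtx D => v (y + t)) (g := fun p : Fin D × Fin D => eV D p.1 + eV D p.2)
  rw [hoff]
  have himg : ((Finset.univ : Finset (Fin D)).offDiag.image
      fun p => eV D p.1 + eV D p.2)
      = ({t : Vtx D | hammingNorm t = 2} : Finset (Vtx D)) := by
    ext t
    simp only [Finset.mem_image, Finset.mem_offDiag, Finset.mem_filter,
      Finset.mem_univ, true_and]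
    rw [norm_two_iff]
    constructor
    · rintro ⟨p, hp, rfl⟩; exact ⟨p.1, p.2, hp, rfl⟩
    · rintro ⟨i, j, hij, rfl⟩; exact ⟨(i, j), hij, rfl⟩
  rw [himg, mulVec_dist2, Finset.mul_sum]
  refine Finset.sum_congr rfl fun t ht => ?_
  simp only [Finset.mem_filter, Finset.mem_univ, true_and] at ht
  obtain ⟨a, b, hab, rfl⟩ := (norm_two_iff t).mp ht
  have hfib : ({p ∈ (Finset.univ : Finset (Fin D)).offDiag |
      eV D p.1 + eV D p.2 = eV D a + eV D b} : Finset (Fin D × Fin D))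
      = {(a, b), (b, a)} := by
    ext p
    simp only [Finset.mem_filter, Finset.mem_offDiag, Finset.mem_univ, true_and,
      Finset.mem_insert, Finset.mem_singleton]
    constructor
    · rintro ⟨hp, heq⟩
      rcases pair_eq hp hab heq with ⟨h1, h2⟩ | ⟨h1, h2⟩
      · left; exact Prod.ext h1 h2
      · right; exact Prod.ext h1 h2
    · rintro (rfl | rfl)
      · exact ⟨hab, rfl⟩
      · exact ⟨hab.symm, add_comm _ _⟩
  rw [hfib]
  have hcard : ({((a, b) : Fin D × Fin D), (b, a)} : Finset (Fin D × Fin D)).card = 2 := by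
    rw [Finset.card_insert_of_notMem, Finset.card_singleton]
    simp only [Finset.mem_singleton]
    intro h
    exact hab (congrArg Prod.fst h)
  rw [hcard]
  rw [nsmul_eq_mul]
  norm_num

end Hyp

namespace Hyp
variable {D : ℕ}

lemma cast_norm (t : Vtx D) : ((hammingNorm t : ℕ) : ZMod 2) = ∑ i, t i := by
  have hfilter : ∑ i ∈ ({i | t i ≠ 0} : Finset (Fin D)), t i = ∑ i, t i :=
    Finset.sum_filter_of_ne (fun x _ h => h)
  have h2 : ((hammingNorm t : ℕ) : ZMod 2)
      = ∑ _i ∈ ({i | t i ≠ 0} : Finset (Fin D)), (1 : ZMod 2) :=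
    Finset.cast_card _
  rw [h2, ← hfilter]
  refine Finset.sum_congr rfl fun i hi => ?_
  rw [Finset.mem_filter] at hi
  exact (zmod2_eq_one hi.2).symm

lemma even_iff_cast (n : ℕ) : Even n ↔ ((n : ZMod 2) = 0) := by
  rw [even_iff_two_dvd, ← ZMod.natCast_eq_zero_iff]

lemma parity_shift {y z : Vtx D} (h : Even (hammingNorm (y - z))) :
    Even (hammingNorm y) ↔ Even (hammingNorm z) := by
  have h0 : ((hammingNorm (y - z) : ℕ) : ZMod 2) = 0 := (even_iff_cast _).mp h
  rw [cast_norm] at h0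
  have hsub : ∑ i, (y - z) i = ∑ i, y i - ∑ i, z i := by
    simp [Finset.sum_sub_distrib]
  rw [hsub] at h0
  have heq : ∑ i, y i = ∑ i, z i := sub_eq_zero.mp h0
  rw [even_iff_cast, even_iff_cast, cast_norm, cast_norm, heq]

end Hyp

open Hyp in
theorem stmt14 (D : ℕ) (hD : 3 ≤ D) (x₀ : Vtx D) (hx₀ : Even (hammingNorm x₀))
    (L : Submodule ℂ (Vtx D → ℂ))
    (hLA : ∀ v ∈ L, (adjCube D).mulVec v ∈ L)
    (hLA' : ∀ v ∈ L, (dualCube D x₀).mulVec v ∈ L) :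
    (∀ v ∈ L ⊓ evenSupp D, (distCube D 2).mulVec v ∈ L ⊓ evenSupp D) ∧
    (∀ v ∈ L ⊓ evenSupp D, (dualCube D x₀).mulVec v ∈ L ⊓ evenSupp D) := by
  constructor
  · rintro v ⟨hvL, hvE⟩
    have hvE' : ∀ y : Vtx D, ¬ Even (hammingNorm y) → v y = 0 := hvE
    constructor
    · have hid : (distCube D 2).mulVec v
          = (2 : ℂ)⁻¹ • ((adjCube D).mulVec ((adjCube D).mulVec v) - (D : ℂ) • v) := by
        funext y
        have hk := keyAA v y
        simp only [Pi.smul_apply, Pi.sub_apply, smul_eq_mul]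
        rw [hk]
        ring
      rw [hid]
      exact Submodule.smul_mem _ _
        (Submodule.sub_mem _ (hLA _ (hLA _ hvL)) (Submodule.smul_mem _ _ hvL))
    · show ∀ y : Vtx D, ¬ Even (hammingNorm y) → (distCube D 2).mulVec v y = 0
      intro y hy
      rw [mulVec_dist2]
      refine Finset.sum_eq_zero fun t ht => ?_
      simp only [Finset.mem_filter, Finset.mem_univ, true_and] at ht
      refine hvE' _ fun hev => hy ?_
      have hsub : y - (y + t) = t := by
        rw [sub_add_eq_sub_sub, sub_self, zero_sub, neg_self]
      have h2 : Even (hammingNorm (y - (y + t))) := by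
        rw [hsub, ht]
        exact even_two
      exact (parity_shift h2).mpr hev
  · rintro v ⟨hvL, hvE⟩
    have hvE' : ∀ y : Vtx D, ¬ Even (hammingNorm y) → v y = 0 := hvE
    refine ⟨hLA' v hvL, ?_⟩
    show ∀ y : Vtx D, ¬ Even (hammingNorm y) → (dualCube D x₀).mulVec v y = 0
    intro y hy
    rw [dualCube, Matrix.mulVec_diagonal, hvE' y hy, mul_zero]
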